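/- With S₁ and S₂ defined as in the two curving methods (S₁ = bh/2 + β − sin β + (γ − sin γ)/2 and S₂ = (1/2 − ab/(a+b)²)(α − sin α), with h, α, β, γ as specified), for b = 5a and sufficiently small a > 0 one has S₁ > S₂. -/

import Mathlib

open Real

noncomputable def curveH (a b : ℝ) : ℝ :=
  Real.sqrt (1 - (a / 2) ^ 2) - Real.sqrt (1 - ((a + b) / 2) ^ 2)

noncomputable def curveS₁ (a b : ℝ) : ℝ :=
  b * curveH a b / 2
    + (Real.arccos (1 - ((b / 2) ^ 2 + (curveH a b) ^ 2) / 2)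
        - Real.sin (Real.arccos (1 - ((b / 2) ^ 2 + (curveH a b) ^ 2) / 2)))
    + (2 * Real.arcsin (a / 2) - Real.sin (2 * Real.arcsin (a / 2))) / 2

noncomputable def curveS₂ (a b : ℝ) : ℝ :=
  (1 / 2 - a * b / (a + b) ^ 2)
    * (2 * Real.arcsin ((a + b) / 2) - Real.sin (2 * Real.arcsin ((a + b) / 2)))

lemma mono_id_sub_sin : Monotone (fun x : ℝ => x - Real.sin x) := by
  have hd : ∀ x : ℝ, HasDerivAt (fun x : ℝ => x - Real.sin x) (1 - Real.cos x) x :=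
    fun x => (hasDerivAt_id x).sub (Real.hasDerivAt_sin x)
  apply monotone_of_deriv_nonneg
  · exact fun x => (hd x).differentiableAt
  · intro x
    rw [(hd x).deriv]
    have := Real.cos_le_one x
    linarith


lemma aux_pow5 {x : ℝ} (h0 : 0 ≤ x) (h1 : x ≤ 1) : x ^ 5 / 100 ≤ x ^ 4 * (5 / 96) := by
  have h := mul_le_mul_of_nonneg_left h1 (pow_nonneg h0 4)
  have he : x ^ 5 = x ^ 4 * x := by ring
  rw [he]
  nlinarith [pow_nonneg h0 4]

lemma curve_aux_final {a : ℝ} (ha : 0 < a) (ha2 : a ≤ 1/100) :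
    13 / 36 * ((6 * a + 10 * a ^ 3) ^ 3 / 6 + (6 * a + 10 * a ^ 3) ^ 4 * (5 / 96)) <
      5 * a * (35 * a ^ 2 / 8) / 2 + (125 * a ^ 3 / 48 - 3125 * a ^ 4 / 1536) := by
  have haa : a ^ 2 ≤ 1 / 10000 := by nlinarith
  have ha3 : a ^ 3 ≤ a / 10000 := by nlinarith [mul_le_mul_of_nonneg_left haa ha.le]
  have hA_ub : 6 * a + 10 * a ^ 3 ≤ 602 * a / 100 := by linarith
  have hA3 : (6 * a + 10 * a ^ 3) ^ 3 ≤ 218167208 * a ^ 3 / 1000000 := by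
    have h := pow_le_pow_left₀ (by positivity : (0:ℝ) ≤ 6 * a + 10 * a ^ 3) hA_ub 3
    have he : (602 * a / 100) ^ 3 = 218167208 * a ^ 3 / 1000000 := by ring
    linarith [he ▸ h]
  have hA4 : (6 * a + 10 * a ^ 3) ^ 4 ≤ 131336659216 * a ^ 4 / 100000000 := by
    have h := pow_le_pow_left₀ (by positivity : (0:ℝ) ≤ 6 * a + 10 * a ^ 3) hA_ub 4
    have he : (602 * a / 100) ^ 4 = 131336659216 * a ^ 4 / 100000000 := by ring
    linarith [he ▸ h]
  have ha43 : a ^ 4 ≤ a ^ 3 / 100 := by nlinarith [pow_pos ha 3]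
  have ha3pos : 0 < a ^ 3 := pow_pos ha 3
  linarith

lemma curve_aux_siny {a : ℝ} (ha : 0 < a) (ha2 : a ≤ 1/100) :
    3 * a ≤ (3 * a + 5 * a ^ 3) - (3 * a + 5 * a ^ 3) ^ 3 / 6
      - (3 * a + 5 * a ^ 3) ^ 4 * (5 / 96) := by
  have haa : a ^ 2 ≤ 1 / 10000 := by nlinarith
  have ha3 : a ^ 3 ≤ a / 10000 := by nlinarith [mul_le_mul_of_nonneg_left haa ha.le]
  have hy_ub : 3 * a + 5 * a ^ 3 ≤ 301 * a / 100 := by linarith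
  have hy3 : (3 * a + 5 * a ^ 3) ^ 3 ≤ 27270901 * a ^ 3 / 1000000 := by
    have h := pow_le_pow_left₀ (by positivity : (0:ℝ) ≤ 3 * a + 5 * a ^ 3) hy_ub 3
    have he : (301 * a / 100) ^ 3 = 27270901 * a ^ 3 / 1000000 := by ring
    linarith [he ▸ h]
  have hy4 : (3 * a + 5 * a ^ 3) ^ 4 ≤ 8208541201 * a ^ 4 / 100000000 := by
    have h := pow_le_pow_left₀ (by positivity : (0:ℝ) ≤ 3 * a + 5 * a ^ 3) hy_ub 4
    have he : (301 * a / 100) ^ 4 = 8208541201 * a ^ 4 / 100000000 := by ring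
    linarith [he ▸ h]
  have ha43 : a ^ 4 ≤ a ^ 3 / 100 := by nlinarith [pow_pos ha 3]
  have ha3pos : 0 < a ^ 3 := pow_pos ha 3
  linarith

set_option maxHeartbeats 1000000 in
theorem curving_radius_one_better_for_b_eq_5a :
    ∃ ε > (0 : ℝ), ∀ a : ℝ, 0 < a → a < ε → curveS₁ a (5 * a) > curveS₂ a (5 * a) := by
  refine ⟨1/100, by norm_num, ?_⟩
  intro a ha haε
  have ha2 : a ≤ 1/100 := le_of_lt haε
  have hpi : (3 : ℝ) < π := Real.pi_gt_three
  -- notation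
  have hab2 : (a + 5 * a) / 2 = 3 * a := by ring
  set H := curveH a (5 * a) with hHdef
  -- sqrt facts
  have hv0 : (0:ℝ) ≤ 1 - (3 * a) ^ 2 := by nlinarith
  have hu0 : (0:ℝ) ≤ 1 - (a / 2) ^ 2 := by nlinarith
  have hsv_nonneg : (0:ℝ) ≤ Real.sqrt (1 - (3 * a) ^ 2) := Real.sqrt_nonneg _
  have hsv_le : Real.sqrt (1 - (3 * a) ^ 2) ≤ 1 - 9 * a ^ 2 / 2 := by
    have h1 : (1 - (3 * a) ^ 2 : ℝ) ≤ (1 - 9 * a ^ 2 / 2) ^ 2 := by nlinarith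
    calc Real.sqrt (1 - (3 * a) ^ 2) ≤ Real.sqrt ((1 - 9 * a ^ 2 / 2) ^ 2) :=
          Real.sqrt_le_sqrt h1
      _ = 1 - 9 * a ^ 2 / 2 := Real.sqrt_sq (by nlinarith)
  have hsv_sq : (Real.sqrt (1 - (3 * a) ^ 2)) ^ 2 = 1 - (3 * a) ^ 2 := Real.sq_sqrt hv0
  -- lower bound on H
  have hH_lb : 35 * a ^ 2 / 8 ≤ H := by
    have key : 35 * a ^ 2 / 8 + Real.sqrt (1 - (3 * a) ^ 2) ≤ Real.sqrt (1 - (a / 2) ^ 2) := by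
      rw [Real.le_sqrt (by positivity) hu0]
      nlinarith [hsv_sq, hsv_le, hsv_nonneg]
    have : H = Real.sqrt (1 - (a / 2) ^ 2) - Real.sqrt (1 - ((a + 5 * a) / 2) ^ 2) := rfl
    rw [this, hab2]
    linarith
  have hH_nonneg : 0 ≤ H := le_trans (by positivity) hH_lb
  have hH_le_one : H ≤ 1 := by
    have h1 : Real.sqrt (1 - (a / 2) ^ 2) ≤ 1 := by
      calc Real.sqrt (1 - (a / 2) ^ 2) ≤ Real.sqrt 1 := Real.sqrt_le_sqrt (by nlinarith)
        _ = 1 := Real.sqrt_one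
    have : H = Real.sqrt (1 - (a / 2) ^ 2) - Real.sqrt (1 - ((a + 5 * a) / 2) ^ 2) := rfl
    rw [this, hab2]
    linarith [Real.sqrt_nonneg (1 - (3 * a) ^ 2)]
  -- β term
  set t := 1 - ((5 * a / 2) ^ 2 + H ^ 2) / 2 with htdef
  have habs52 : |5 * a / 2| ≤ 1 := by rw [abs_of_nonneg (by linarith)]; linarith
  have hcosb := Real.cos_bound habs52
  rw [abs_le] at hcosb
  have habs52' : |5 * a / 2| = 5 * a / 2 := abs_of_nonneg (by linarith)
  rw [habs52'] at hcosb
  have ht_le : t ≤ Real.cos (5 * a / 2) := by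
    have h1 : 1 - (5 * a / 2) ^ 2 / 2 - (5 * a / 2) ^ 4 * (5 / 96) ≤ Real.cos (5 * a / 2) := by
      linarith [hcosb.1]
    have h2 : t ≤ 1 - (5 * a / 2) ^ 2 / 2 - (5 * a / 2) ^ 4 * (5 / 96) := by
      rw [htdef]
      nlinarith [hH_lb, hH_nonneg]
    linarith
  have hbeta : 5 * a / 2 ≤ Real.arccos t := by
    have h1 : Real.arccos (Real.cos (5 * a / 2)) ≤ Real.arccos t := by
      unfold Real.arccos
      have := Real.monotone_arcsin ht_le
      linarith
    rw [Real.arccos_cos (by linarith) (by linarith)] at h1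
    exact h1
  have hbeta_term : 5 * a / 2 - Real.sin (5 * a / 2) ≤ Real.arccos t - Real.sin (Real.arccos t) :=
    mono_id_sub_sin hbeta
  have hsin52 := Real.sin_bound habs52
  rw [abs_le, habs52'] at hsin52
  have hbeta_lb : 125 * a ^ 3 / 48 - 3125 * a ^ 4 / 1536 ≤
      Real.arccos t - Real.sin (Real.arccos t) := by
    have hexp : (5 * a / 2) ^ 3 / 6 - (5 * a / 2) ^ 4 * (5 / 96)
        = 125 * a ^ 3 / 48 - 3125 * a ^ 4 / 1536 := by ring
    linarith only [hsin52.2, hbeta_term, hexp, aux_pow5 (x := 5 * a / 2) (by linarith) (abs_le.mp habs52).2]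
  -- γ term nonneg
  have hgamma : 0 ≤ 2 * Real.arcsin (a / 2) - Real.sin (2 * Real.arcsin (a / 2)) := by
    have h1 : 0 ≤ 2 * Real.arcsin (a / 2) := by
      have := Real.arcsin_nonneg.mpr (by linarith : (0:ℝ) ≤ a / 2)
      linarith
    linarith [Real.sin_le h1]
  -- α bound
  have harcsin3a : Real.arcsin (3 * a) ≤ 3 * a + 5 * a ^ 3 := by
    have hy1 : |3 * a + 5 * a ^ 3| ≤ 1 := by
      rw [abs_of_nonneg (by positivity)]; nlinarith
    have hsiny := Real.sin_bound hy1
    rw [abs_le, abs_of_nonneg (by positivity : (0:ℝ) ≤ 3 * a + 5 * a ^ 3)] at hsiny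
    have h3a_le : 3 * a ≤ Real.sin (3 * a + 5 * a ^ 3) := by
      linarith only [hsiny.1, curve_aux_siny ha ha2, aux_pow5 (x := 3 * a + 5 * a ^ 3) (by positivity) (abs_le.mp hy1).2]
    calc Real.arcsin (3 * a) ≤ Real.arcsin (Real.sin (3 * a + 5 * a ^ 3)) :=
          Real.monotone_arcsin h3a_le
      _ = 3 * a + 5 * a ^ 3 := Real.arcsin_sin (by nlinarith) (by nlinarith)
  have harcsin3a_nonneg : 0 ≤ Real.arcsin (3 * a) :=
    Real.arcsin_nonneg.mpr (by linarith)
  -- α term upper bound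
  set α := 2 * Real.arcsin (3 * a) with halpha
  have halpha_nonneg : 0 ≤ α := by positivity
  have halpha_ub : α ≤ 6 * a + 10 * a ^ 3 := by rw [halpha]; linarith
  have halpha_le_one : |α| ≤ 1 := by
    rw [abs_of_nonneg halpha_nonneg]; nlinarith
  have hsina := Real.sin_bound halpha_le_one
  rw [abs_le, abs_of_nonneg halpha_nonneg] at hsina
  have halpha_term : α - Real.sin α ≤ α ^ 3 / 6 + α ^ 4 * (5 / 96) := by
    linarith [hsina.2, aux_pow5 (x := α) halpha_nonneg (abs_le.mp halpha_le_one).2]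
  have halpha_term2 : α - Real.sin α ≤
      (6 * a + 10 * a ^ 3) ^ 3 / 6 + (6 * a + 10 * a ^ 3) ^ 4 * (5 / 96) := by
    have h3 : α ^ 3 ≤ (6 * a + 10 * a ^ 3) ^ 3 := by
      exact pow_le_pow_left₀ halpha_nonneg halpha_ub 3
    have h4 : α ^ 4 ≤ (6 * a + 10 * a ^ 3) ^ 4 := by
      exact pow_le_pow_left₀ halpha_nonneg halpha_ub 4
    linarith
  -- coefficient of S₂
  have hcoef : (1 / 2 - a * (5 * a) / (a + 5 * a) ^ 2 : ℝ) = 13 / 36 := by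
    field_simp
    ring
  -- unfold and finish
  have hS2 : curveS₂ a (5 * a) =
      13 / 36 * (α - Real.sin α) := by
    unfold curveS₂
    rw [hcoef, hab2]
  have hS1 : curveS₁ a (5 * a) =
      5 * a * H / 2 + (Real.arccos t - Real.sin (Real.arccos t))
        + (2 * Real.arcsin (a / 2) - Real.sin (2 * Real.arcsin (a / 2))) / 2 := by
    unfold curveS₁
    rw [htdef]
  rw [hS1, hS2]
  have hS2ub : 13 / 36 * (α - Real.sin α) ≤
      13 / 36 * ((6 * a + 10 * a ^ 3) ^ 3 / 6 + (6 * a + 10 * a ^ 3) ^ 4 * (5 / 96)) := by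
    linarith only [halpha_term2]
  have hS1lb : 5 * a * (35 * a ^ 2 / 8) / 2 + (125 * a ^ 3 / 48 - 3125 * a ^ 4 / 1536) ≤
      5 * a * H / 2 + (Real.arccos t - Real.sin (Real.arccos t))
        + (2 * Real.arcsin (a / 2) - Real.sin (2 * Real.arcsin (a / 2))) / 2 := by
    have h1 := mul_le_mul_of_nonneg_left hH_lb (by linarith : (0:ℝ) ≤ 5 * a / 2)
    linarith only [h1, hbeta_lb, hgamma]
  have hfinal : 13 / 36 * ((6 * a + 10 * a ^ 3) ^ 3 / 6 + (6 * a + 10 * a ^ 3) ^ 4 * (5 / 96)) <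
      5 * a * (35 * a ^ 2 / 8) / 2 + (125 * a ^ 3 / 48 - 3125 * a ^ 4 / 1536) :=
    curve_aux_final ha ha2
  linarith
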